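/- Let 𝔤 = 𝔤_{3.1} ⊕ 𝔤₁ be the 4-dimensional real Lie algebra with basis e₁,...,e₄ and only nonzero bracket [e₂,e₃] = e₁. A 4×4 real matrix R equals η·Id + D for some η ∈ ℝ and some derivation D of 𝔤 if and only if R₂₁ = R₃₁ = R₄₁ = R₂₄ = R₃₄ = 0. In this case η = R₂₂ + R₃₃ − R₁₁. -/
import Mathlib


open Matrix

/-- The Lie bracket of the Lie algebra, in coordinates. -/
def br (x y : Fin 4 → ℝ) : Fin 4 → ℝ :=
  ![(x 1 * y 2 - x 2 * y 1), (0:ℝ), (0:ℝ), (0:ℝ)]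

/-- `D` (acting via `mulVec`) is a derivation of the bracket. -/
def IsDer (D : Matrix (Fin 4) (Fin 4) ℝ) : Prop :=
  ∀ x y : Fin 4 → ℝ, D.mulVec (br x y) = br (D.mulVec x) y + br x (D.mulVec y)

lemma der_entries {D : Matrix (Fin 4) (Fin 4) ℝ} (hD : IsDer D) :
    D 1 0 = 0 ∧ D 2 0 = 0 ∧ D 3 0 = 0 ∧ D 1 3 = 0 ∧ D 2 3 = 0 ∧
    D 0 0 = D 1 1 + D 2 2 := by
  have h1 := hD ![0,1,0,0] ![0,0,1,0]
  have h2 := hD ![0,0,0,1] ![0,0,1,0]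
  have h3 := hD ![0,0,0,1] ![0,1,0,0]
  have e10 := congrFun h1 1
  have e20 := congrFun h1 2
  have e30 := congrFun h1 3
  have e00 := congrFun h1 0
  have e13 := congrFun h2 0
  have e23 := congrFun h3 0
  simp [Matrix.mulVec, dotProduct, br, Fin.sum_univ_four] at e10 e20 e30 e00 e13 e23
  refine ⟨e10, e20, e30, e13.symm, by linarith, by linarith⟩

theorem stmt_2 (R : Matrix (Fin 4) (Fin 4) ℝ) :
    ((∃ (η : ℝ) (D : Matrix (Fin 4) (Fin 4) ℝ), IsDer D ∧
        R = η • (1 : Matrix (Fin 4) (Fin 4) ℝ) + D) ↔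
      (R 1 0 = 0 ∧ R 2 0 = 0 ∧ R 3 0 = 0 ∧ R 1 3 = 0 ∧ R 2 3 = 0)) ∧
    (∀ (η : ℝ) (D : Matrix (Fin 4) (Fin 4) ℝ), IsDer D →
      R = η • (1 : Matrix (Fin 4) (Fin 4) ℝ) + D → η = R 1 1 + R 2 2 - R 0 0) := by
  constructor
  · constructor
    · rintro ⟨η, D, hD, rfl⟩
      obtain ⟨a1, a2, a3, a4, a5, a6⟩ := der_entries hD
      simp [Matrix.add_apply, Matrix.smul_apply, Matrix.one_apply, a1, a2, a3, a4, a5]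
    · rintro ⟨h1, h2, h3, h4, h5⟩
      refine ⟨R 1 1 + R 2 2 - R 0 0, R - (R 1 1 + R 2 2 - R 0 0) • 1, ?_, by abel⟩
      intro x y
      funext i
      fin_cases i <;>
        simp [Matrix.mulVec, dotProduct, br, Fin.sum_univ_four, Matrix.sub_apply,
          Matrix.smul_apply, Matrix.one_apply, h1, h2, h3, h4, h5] <;> ring
  · intro η D hD hR
    obtain ⟨-, -, -, -, -, a6⟩ := der_entries hD
    have r0 := congrFun (congrFun hR 0) 0
    have r1 := congrFun (congrFun hR 1) 1
    have r2 := congrFun (congrFun hR 2) 2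
    simp [Matrix.add_apply, Matrix.smul_apply, Matrix.one_apply] at r0 r1 r2
    linarith
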